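/- The q-Lucas polynomials L_n(x,s) = l_n(x + (q−1)s·D_q, s)·1 have explicit formula L_n(x,s) = Σ_{k=0}^{⌊n/2⌋} q^{C(k,2)}·([n]_q/[n−k]_q)·qbinom(n−k,k)·s^k·x^{n−2k} for n > 0, and L_0 = 1. -/

import Mathlib

open Polynomial

noncomputable section

abbrev Kq : Type := RatFunc ℚ
def q : Kq := RatFunc.X
abbrev Ks : Type := Polynomial Kq
abbrev Ax : Type := Polynomial Ks
def qInt (n : ℕ) : Kq := ∑ i ∈ Finset.range n, q ^ i
def qFact (n : ℕ) : Kq := ∏ i ∈ Finset.range n, qInt (i + 1)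
def qChoose (n k : ℕ) : Kq := qFact n / (qFact k * qFact (n - k))
def qDeriv (p : Ax) : Ax :=
  p.sum fun m a => Polynomial.C a * Polynomial.C (Polynomial.C (qInt m)) * X ^ (m - 1)
/-- The operator `X = (mult. by x) + (q−1)s·D_q`. -/
def opX (p : Ax) : Ax :=
  X * p + Polynomial.C ((Polynomial.C q - 1) * Polynomial.X) * qDeriv p

/-! ### Scalar lemmas -/

lemma q_pow_ne_one {m : ℕ} (hm : 1 ≤ m) : q ^ m ≠ 1 := by
  have : q ^ m = algebraMap (Polynomial ℚ) Kq (Polynomial.X ^ m) := by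
    simp [q, RatFunc.algebraMap_X]
  rw [this]
  intro h
  have h1 : algebraMap (Polynomial ℚ) Kq (Polynomial.X ^ m) = algebraMap (Polynomial ℚ) Kq 1 := by
    simpa using h
  have := IsFractionRing.injective (Polynomial ℚ) Kq h1
  have hdeg := congrArg Polynomial.natDegree this
  simp [Polynomial.natDegree_X_pow] at hdeg
  omega

lemma q_pow_sub_one_ne_zero {m : ℕ} (hm : 1 ≤ m) : q ^ m - 1 ≠ 0 :=
  sub_ne_zero.mpr (q_pow_ne_one hm)

lemma q_sub_one_ne_zero : q - 1 ≠ 0 := by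
  have := q_pow_sub_one_ne_zero (m := 1) le_rfl
  simpa using this

lemma qInt_eq (m : ℕ) : qInt m = (q ^ m - 1) / (q - 1) := by
  rw [eq_div_iff q_sub_one_ne_zero]
  simpa [qInt] using geom_sum_mul q m

lemma qInt_ne_zero {m : ℕ} (hm : 1 ≤ m) : qInt m ≠ 0 := by
  rw [qInt_eq]
  exact div_ne_zero (q_pow_sub_one_ne_zero hm) q_sub_one_ne_zero

lemma qInt_zero : qInt 0 = 0 := by simp [qInt]

lemma qInt_one : qInt 1 = 1 := by simp [qInt]

lemma qInt_mul (m : ℕ) : (q - 1) * qInt m = q ^ m - 1 := by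
  rw [qInt_eq, mul_div_cancel₀ _ q_sub_one_ne_zero]

lemma qFact_succ (n : ℕ) : qFact (n + 1) = qFact n * qInt (n + 1) :=
  Finset.prod_range_succ _ _

lemma qFact_zero : qFact 0 = 1 := by simp [qFact]

lemma qFact_one : qFact 1 = 1 := by simp [qFact, qInt]

lemma qFact_ne_zero (n : ℕ) : qFact n ≠ 0 := by
  induction n with
  | zero => simp [qFact]
  | succ n ih =>
    rw [qFact_succ]
    exact mul_ne_zero ih (qInt_ne_zero (by omega))

/-- The coefficient in the explicit formula. -/
def cc (n k : ℕ) : Kq := q ^ k.choose 2 * (qInt n / qInt (n - k)) * qChoose (n - k) k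

lemma cc_eq (a k : ℕ) : cc (a + 2 * k) k =
    q ^ k.choose 2 * (qInt (a + 2 * k) / qInt (a + k)) * (qFact (a + k) / (qFact k * qFact a)) := by
  rw [cc, qChoose, show a + 2 * k - k = a + k by omega, show a + k - k = a by omega]

lemma cc_zero {n : ℕ} (hn : 1 ≤ n) : cc n 0 = 1 := by
  rw [cc, qChoose, Nat.sub_zero, Nat.sub_zero]
  rw [div_self (qInt_ne_zero hn)]
  have h0 : qFact 0 = 1 := by simp [qFact]
  rw [h0, one_mul, div_self (qFact_ne_zero n)]
  simp

lemma choose_succ_two (j : ℕ) : (j + 1).choose 2 = j.choose 2 + j := by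
  rw [Nat.choose_succ_succ, Nat.choose_one_right, Nat.add_comm]

lemma cc_clear (a k : ℕ) :
    (qInt (a + k) * (qFact k * qFact a)) * cc (a + 2 * k) k
      = q ^ k.choose 2 * qInt (a + 2 * k) * qFact (a + k) := by
  rcases Nat.eq_zero_or_pos (a + k) with h | h
  · obtain ⟨rfl, rfl⟩ : a = 0 ∧ k = 0 := by omega
    rw [cc_eq]
    simp [qInt]
  · rw [cc_eq]
    have h1 : qInt (a + k) ≠ 0 := qInt_ne_zero h
    have h2 := qFact_ne_zero k
    have h3 := qFact_ne_zero a
    field_simp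

set_option maxHeartbeats 1000000 in
lemma key (r j : ℕ) :
    cc (r + 2 * j + 3) (j + 1) = cc (r + 2 * j + 2) (j + 1)
      + (q - 1) * qInt (r + 2) * cc (r + 2 * j + 2) j + cc (r + 2 * j + 1) j := by
  have hd1 : qInt (r + j + 2) * (qFact (j + 1) * qFact (r + 1)) ≠ 0 :=
    mul_ne_zero (qInt_ne_zero (by omega)) (mul_ne_zero (qFact_ne_zero _) (qFact_ne_zero _))
  have hd2 : qInt (r + j + 1) * (qFact (j + 1) * qFact r) ≠ 0 :=
    mul_ne_zero (qInt_ne_zero (by omega)) (mul_ne_zero (qFact_ne_zero _) (qFact_ne_zero _))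
  have hd3 : qInt (r + j + 2) * (qFact j * qFact (r + 2)) ≠ 0 :=
    mul_ne_zero (qInt_ne_zero (by omega)) (mul_ne_zero (qFact_ne_zero _) (qFact_ne_zero _))
  have hd4 : qInt (r + j + 1) * (qFact j * qFact (r + 1)) ≠ 0 :=
    mul_ne_zero (qInt_ne_zero (by omega)) (mul_ne_zero (qFact_ne_zero _) (qFact_ne_zero _))
  have c1 := cc_clear (r + 1) (j + 1)
  have c2 := cc_clear r (j + 1)
  have c3 := cc_clear (r + 2) j
  have c4 := cc_clear (r + 1) j
  rw [show r + 1 + 2 * (j + 1) = r + 2 * j + 3 by ring,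
      show r + 1 + (j + 1) = r + j + 2 by ring] at c1
  rw [show r + 2 * (j + 1) = r + 2 * j + 2 by ring,
      show r + (j + 1) = r + j + 1 by ring] at c2
  rw [show r + 2 + 2 * j = r + 2 * j + 2 by ring,
      show r + 2 + j = r + j + 2 by ring] at c3
  rw [show r + 1 + 2 * j = r + 2 * j + 1 by ring,
      show r + 1 + j = r + j + 1 by ring] at c4
  apply mul_left_cancel₀ (a := (qInt (r + j + 2) * (qFact (j + 1) * qFact (r + 1)))
    * (qInt (r + j + 1) * (qFact (j + 1) * qFact r))
    * (qInt (r + j + 2) * (qFact j * qFact (r + 2)))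
    * (qInt (r + j + 1) * (qFact j * qFact (r + 1))))
    (mul_ne_zero (mul_ne_zero (mul_ne_zero hd1 hd2) hd3) hd4)
  calc (qInt (r + j + 2) * (qFact (j + 1) * qFact (r + 1)))
        * (qInt (r + j + 1) * (qFact (j + 1) * qFact r))
        * (qInt (r + j + 2) * (qFact j * qFact (r + 2)))
        * (qInt (r + j + 1) * (qFact j * qFact (r + 1))) * cc (r + 2 * j + 3) (j + 1)
      = (qInt (r + j + 1) * (qFact (j + 1) * qFact r))
        * (qInt (r + j + 2) * (qFact j * qFact (r + 2)))
        * (qInt (r + j + 1) * (qFact j * qFact (r + 1)))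
        * ((qInt (r + j + 2) * (qFact (j + 1) * qFact (r + 1))) * cc (r + 2 * j + 3) (j + 1)) := by
        ring
    _ = (qInt (r + j + 1) * (qFact (j + 1) * qFact r))
        * (qInt (r + j + 2) * (qFact j * qFact (r + 2)))
        * (qInt (r + j + 1) * (qFact j * qFact (r + 1)))
        * (q ^ (j + 1).choose 2 * qInt (r + 2 * j + 3) * qFact (r + j + 2)) := by rw [c1]
    _ = (qInt (r + j + 2) * (qFact (j + 1) * qFact (r + 1)))
        * (qInt (r + j + 1) * (qFact (j + 1) * qFact r))
        * (qInt (r + j + 2) * (qFact j * qFact (r + 2)))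
        * (qInt (r + j + 1) * (qFact j * qFact (r + 1)))
        * (cc (r + 2 * j + 2) (j + 1) + (q - 1) * qInt (r + 2) * cc (r + 2 * j + 2) j
            + cc (r + 2 * j + 1) j) := by
        rw [mul_add, mul_add]
        rw [show (qInt (r + j + 2) * (qFact (j + 1) * qFact (r + 1)))
            * (qInt (r + j + 1) * (qFact (j + 1) * qFact r))
            * (qInt (r + j + 2) * (qFact j * qFact (r + 2)))
            * (qInt (r + j + 1) * (qFact j * qFact (r + 1))) * cc (r + 2 * j + 2) (j + 1)
          = (qInt (r + j + 2) * (qFact (j + 1) * qFact (r + 1)))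
            * (qInt (r + j + 2) * (qFact j * qFact (r + 2)))
            * (qInt (r + j + 1) * (qFact j * qFact (r + 1)))
            * ((qInt (r + j + 1) * (qFact (j + 1) * qFact r)) * cc (r + 2 * j + 2) (j + 1)) by ring,
          c2]
        rw [show (qInt (r + j + 2) * (qFact (j + 1) * qFact (r + 1)))
            * (qInt (r + j + 1) * (qFact (j + 1) * qFact r))
            * (qInt (r + j + 2) * (qFact j * qFact (r + 2)))
            * (qInt (r + j + 1) * (qFact j * qFact (r + 1)))
            * ((q - 1) * qInt (r + 2) * cc (r + 2 * j + 2) j)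
          = (q - 1) * qInt (r + 2)
            * ((qInt (r + j + 2) * (qFact (j + 1) * qFact (r + 1)))
            * (qInt (r + j + 1) * (qFact (j + 1) * qFact r))
            * (qInt (r + j + 1) * (qFact j * qFact (r + 1))))
            * ((qInt (r + j + 2) * (qFact j * qFact (r + 2))) * cc (r + 2 * j + 2) j) by ring,
          c3]
        rw [show (qInt (r + j + 2) * (qFact (j + 1) * qFact (r + 1)))
            * (qInt (r + j + 1) * (qFact (j + 1) * qFact r))
            * (qInt (r + j + 2) * (qFact j * qFact (r + 2)))
            * (qInt (r + j + 1) * (qFact j * qFact (r + 1))) * cc (r + 2 * j + 1) j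
          = (qInt (r + j + 2) * (qFact (j + 1) * qFact (r + 1)))
            * (qInt (r + j + 1) * (qFact (j + 1) * qFact r))
            * (qInt (r + j + 2) * (qFact j * qFact (r + 2)))
            * ((qInt (r + j + 1) * (qFact j * qFact (r + 1))) * cc (r + 2 * j + 1) j) by ring,
          c4]
        rw [qFact_succ (r + j + 1), qFact_succ j, qFact_succ (r + 1), qFact_succ r,
            choose_succ_two, pow_add]
        rw [qInt_eq (r + 2 * j + 3), qInt_eq (r + 2 * j + 2), qInt_eq (r + 2 * j + 1),
            qInt_eq (r + j + 2), qInt_eq (r + j + 1), qInt_eq (j + 1),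
            qInt_eq (r + 2), qInt_eq (r + 1)]
        have h1 := q_sub_one_ne_zero
        field_simp
        ring

set_option maxHeartbeats 1000000 in
lemma boundary (j : ℕ) (hj : 1 ≤ j) :
    cc (2 * j + 2) (j + 1) = (q - 1) * qInt 1 * cc (2 * j + 1) j + cc (2 * j) j := by
  have hd1 : qInt (j + 1) * qFact (j + 1) ≠ 0 :=
    mul_ne_zero (qInt_ne_zero (by omega)) (qFact_ne_zero _)
  have hd2 : qInt (j + 1) * qFact j ≠ 0 :=
    mul_ne_zero (qInt_ne_zero (by omega)) (qFact_ne_zero _)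
  have hd3 : qInt j * qFact j ≠ 0 :=
    mul_ne_zero (qInt_ne_zero hj) (qFact_ne_zero _)
  have c1 := cc_clear 0 (j + 1)
  have c2 := cc_clear 1 j
  have c3 := cc_clear 0 j
  rw [show (0:ℕ) + 2 * (j + 1) = 2 * j + 2 by ring, show (0:ℕ) + (j + 1) = j + 1 by ring,
      qFact_zero, mul_one] at c1
  rw [show (1:ℕ) + 2 * j = 2 * j + 1 by ring, show (1:ℕ) + j = j + 1 by ring,
      qFact_one, mul_one] at c2
  rw [show (0:ℕ) + 2 * j = 2 * j by ring, show (0:ℕ) + j = j by ring,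
      qFact_zero, mul_one] at c3
  apply mul_left_cancel₀ (a := (qInt (j + 1) * qFact (j + 1)) * (qInt (j + 1) * qFact j)
    * (qInt j * qFact j)) (mul_ne_zero (mul_ne_zero hd1 hd2) hd3)
  calc (qInt (j + 1) * qFact (j + 1)) * (qInt (j + 1) * qFact j) * (qInt j * qFact j)
        * cc (2 * j + 2) (j + 1)
      = (qInt (j + 1) * qFact j) * (qInt j * qFact j)
        * ((qInt (j + 1) * qFact (j + 1)) * cc (2 * j + 2) (j + 1)) := by ring
    _ = (qInt (j + 1) * qFact j) * (qInt j * qFact j)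
        * (q ^ (j + 1).choose 2 * qInt (2 * j + 2) * qFact (j + 1)) := by rw [c1]
    _ = (qInt (j + 1) * qFact (j + 1)) * (qInt (j + 1) * qFact j) * (qInt j * qFact j)
        * ((q - 1) * qInt 1 * cc (2 * j + 1) j + cc (2 * j) j) := by
        rw [mul_add]
        rw [show (qInt (j + 1) * qFact (j + 1)) * (qInt (j + 1) * qFact j) * (qInt j * qFact j)
            * ((q - 1) * qInt 1 * cc (2 * j + 1) j)
          = (q - 1) * qInt 1 * ((qInt (j + 1) * qFact (j + 1)) * (qInt j * qFact j))
            * ((qInt (j + 1) * qFact j) * cc (2 * j + 1) j) by ring, c2]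
        rw [show (qInt (j + 1) * qFact (j + 1)) * (qInt (j + 1) * qFact j) * (qInt j * qFact j)
            * cc (2 * j) j
          = (qInt (j + 1) * qFact (j + 1)) * (qInt (j + 1) * qFact j)
            * ((qInt j * qFact j) * cc (2 * j) j) by ring, c3]
        rw [show (q - 1) * qInt 1 * ((qInt (j + 1) * qFact (j + 1)) * (qInt j * qFact j))
            * (q ^ j.choose 2 * qInt (2 * j + 1) * qFact (j + 1))
          = (q ^ (2 * j + 1) - 1) * ((qInt (j + 1) * qFact (j + 1)) * (qInt j * qFact j)
            * (q ^ j.choose 2 * qFact (j + 1))) from by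
            rw [qInt_one, ← qInt_mul (2 * j + 1)]; ring]
        rw [qFact_succ j, choose_succ_two, pow_add]
        rw [qInt_eq (2 * j + 2), qInt_eq (2 * j), qInt_eq (j + 1), qInt_eq j]
        have h1 := q_sub_one_ne_zero
        field_simp
        ring

/-! ### Polynomial lemmas -/

lemma qDeriv_zero : qDeriv 0 = 0 := by simp [qDeriv]

lemma qDeriv_add (p r : Ax) : qDeriv (p + r) = qDeriv p + qDeriv r := by
  unfold qDeriv
  apply Polynomial.sum_add_index
  · intro i; simp
  · intro a b₁ b₂; rw [Polynomial.C_add]; ring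

lemma qDeriv_monomial (e : ℕ) (a : Ks) :
    qDeriv (Polynomial.C a * X ^ e)
      = Polynomial.C a * Polynomial.C (Polynomial.C (qInt e)) * X ^ (e - 1) := by
  rw [Polynomial.C_mul_X_pow_eq_monomial, qDeriv, Polynomial.sum_monomial_index]
  simp

lemma opX_zero : opX 0 = 0 := by simp [opX, qDeriv_zero]

lemma opX_add (p r : Ax) : opX (p + r) = opX p + opX r := by
  simp only [opX, qDeriv_add]
  ring

lemma opX_sum (s : Finset ℕ) (f : ℕ → Ax) :
    opX (∑ i ∈ s, f i) = ∑ i ∈ s, opX (f i) := by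
  induction s using Finset.induction_on with
  | empty => simpa using opX_zero
  | insert _ _ h ih => rw [Finset.sum_insert h, Finset.sum_insert h, opX_add, ih]

lemma opX_term (c : Kq) (k e : ℕ) :
    opX (Polynomial.C (Polynomial.C c * Polynomial.X ^ k) * X ^ e)
      = Polynomial.C (Polynomial.C c * Polynomial.X ^ k) * X ^ (e + 1)
      + Polynomial.C (Polynomial.C ((q - 1) * qInt e * c) * Polynomial.X ^ (k + 1))
          * X ^ (e - 1) := by
  rw [opX, qDeriv_monomial]
  simp only [map_mul, map_sub, map_one, map_pow, pow_succ]
  ring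

lemma CX_term (c : Kq) (k e : ℕ) :
    Polynomial.C Polynomial.X
        * (Polynomial.C (Polynomial.C c * Polynomial.X ^ k) * X ^ e)
      = Polynomial.C (Polynomial.C c * Polynomial.X ^ (k + 1)) * X ^ e := by
  rw [← mul_assoc, ← map_mul]
  congr 2
  ring

/-- The explicit formula polynomial. -/
def FF (n : ℕ) : Ax := ∑ k ∈ Finset.range (n / 2 + 1),
  Polynomial.C (Polynomial.C (cc n k) * Polynomial.X ^ k) * X ^ (n - 2 * k)

lemma step_even (m : ℕ) :
    FF (m + m + 3) = opX (FF (m + m + 2)) + Polynomial.C Polynomial.X * FF (m + m + 1) := by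
  unfold FF
  rw [show (m + m + 3) / 2 + 1 = m + 2 by omega, show (m + m + 2) / 2 + 1 = m + 2 by omega,
      show (m + m + 1) / 2 + 1 = m + 1 by omega]
  have hA : opX (∑ k ∈ Finset.range (m + 2),
        Polynomial.C (Polynomial.C (cc (m + m + 2) k) * Polynomial.X ^ k) * X ^ (m + m + 2 - 2 * k))
      = (∑ k ∈ Finset.range (m + 2),
          Polynomial.C (Polynomial.C (cc (m + m + 2) k) * Polynomial.X ^ k)
            * X ^ (m + m + 2 - 2 * k + 1))
        + ∑ k ∈ Finset.range (m + 2),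
          Polynomial.C (Polynomial.C ((q - 1) * qInt (m + m + 2 - 2 * k) * cc (m + m + 2) k)
            * Polynomial.X ^ (k + 1)) * X ^ (m + m + 2 - 2 * k - 1) := by
    rw [opX_sum, ← Finset.sum_add_distrib]
    exact Finset.sum_congr rfl fun k _ => opX_term _ _ _
  have hC : Polynomial.C Polynomial.X * (∑ k ∈ Finset.range (m + 1),
        Polynomial.C (Polynomial.C (cc (m + m + 1) k) * Polynomial.X ^ k) * X ^ (m + m + 1 - 2 * k))
      = ∑ k ∈ Finset.range (m + 1),
          Polynomial.C (Polynomial.C (cc (m + m + 1) k) * Polynomial.X ^ (k + 1))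
            * X ^ (m + m + 1 - 2 * k) := by
    rw [Finset.mul_sum]
    exact Finset.sum_congr rfl fun k _ => CX_term _ _ _
  rw [hA, hC]
  rw [Finset.sum_range_succ (fun k => Polynomial.C (Polynomial.C ((q - 1) * qInt (m + m + 2 - 2 * k)
      * cc (m + m + 2) k) * Polynomial.X ^ (k + 1)) * X ^ (m + m + 2 - 2 * k - 1)) (m + 1)]
  have hB0 : Polynomial.C (Polynomial.C ((q - 1) * qInt (m + m + 2 - 2 * (m + 1))
      * cc (m + m + 2) (m + 1)) * Polynomial.X ^ (m + 1 + 1)) * X ^ (m + m + 2 - 2 * (m + 1) - 1)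
      = 0 := by
    rw [show m + m + 2 - 2 * (m + 1) = 0 by omega, qInt_zero]
    simp
  rw [hB0, add_zero]
  rw [Finset.sum_range_succ' (fun k => Polynomial.C (Polynomial.C (cc (m + m + 3) k)
      * Polynomial.X ^ k) * X ^ (m + m + 3 - 2 * k)) (m + 1)]
  rw [Finset.sum_range_succ' (fun k => Polynomial.C (Polynomial.C (cc (m + m + 2) k)
      * Polynomial.X ^ k) * X ^ (m + m + 2 - 2 * k + 1)) (m + 1)]
  have hT0 : Polynomial.C (Polynomial.C (cc (m + m + 3) 0) * Polynomial.X ^ 0)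
        * X ^ (m + m + 3 - 2 * 0)
      = Polynomial.C (Polynomial.C (cc (m + m + 2) 0) * Polynomial.X ^ 0)
        * X ^ (m + m + 2 - 2 * 0 + 1) := by
    rw [cc_zero (by omega), cc_zero (by omega), show m + m + 3 - 2 * 0 = m + m + 2 - 2 * 0 + 1 by omega]
  have hstep : ∀ i ∈ Finset.range (m + 1),
      Polynomial.C (Polynomial.C (cc (m + m + 3) (i + 1)) * Polynomial.X ^ (i + 1))
          * X ^ (m + m + 3 - 2 * (i + 1))
      = Polynomial.C (Polynomial.C (cc (m + m + 2) (i + 1)) * Polynomial.X ^ (i + 1))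
          * X ^ (m + m + 2 - 2 * (i + 1) + 1)
        + Polynomial.C (Polynomial.C ((q - 1) * qInt (m + m + 2 - 2 * i) * cc (m + m + 2) i)
            * Polynomial.X ^ (i + 1)) * X ^ (m + m + 2 - 2 * i - 1)
        + Polynomial.C (Polynomial.C (cc (m + m + 1) i) * Polynomial.X ^ (i + 1))
            * X ^ (m + m + 1 - 2 * i) := by
    intro i hi
    have him : i ≤ m := by simpa [Nat.lt_succ_iff] using Finset.mem_range.mp hi
    have hk := key (m + m - 2 * i) i
    rw [show m + m - 2 * i + 2 * i + 3 = m + m + 3 by omega,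
        show m + m - 2 * i + 2 * i + 2 = m + m + 2 by omega,
        show m + m - 2 * i + 2 * i + 1 = m + m + 1 by omega,
        show m + m - 2 * i + 2 = m + m + 2 - 2 * i by omega] at hk
    rw [hk, show m + m + 2 - 2 * (i + 1) + 1 = m + m + 3 - 2 * (i + 1) by omega,
        show m + m + 2 - 2 * i - 1 = m + m + 3 - 2 * (i + 1) by omega,
        show m + m + 1 - 2 * i = m + m + 3 - 2 * (i + 1) by omega]
    simp only [map_add, add_mul]
  rw [Finset.sum_congr rfl hstep, hT0]
  rw [Finset.sum_add_distrib, Finset.sum_add_distrib]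
  abel

lemma step_odd (m : ℕ) :
    FF (2 * m + 1 + 3) = opX (FF (2 * m + 1 + 2))
      + Polynomial.C Polynomial.X * FF (2 * m + 1 + 1) := by
  rw [show 2 * m + 1 + 3 = 2 * m + 4 by ring, show 2 * m + 1 + 2 = 2 * m + 3 by ring,
      show 2 * m + 1 + 1 = 2 * m + 2 by ring]
  unfold FF
  rw [show (2 * m + 4) / 2 + 1 = m + 3 by omega, show (2 * m + 3) / 2 + 1 = m + 2 by omega,
      show (2 * m + 2) / 2 + 1 = m + 2 by omega]
  have hA : opX (∑ k ∈ Finset.range (m + 2),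
        Polynomial.C (Polynomial.C (cc (2 * m + 3) k) * Polynomial.X ^ k) * X ^ (2 * m + 3 - 2 * k))
      = (∑ k ∈ Finset.range (m + 2),
          Polynomial.C (Polynomial.C (cc (2 * m + 3) k) * Polynomial.X ^ k)
            * X ^ (2 * m + 3 - 2 * k + 1))
        + ∑ k ∈ Finset.range (m + 2),
          Polynomial.C (Polynomial.C ((q - 1) * qInt (2 * m + 3 - 2 * k) * cc (2 * m + 3) k)
            * Polynomial.X ^ (k + 1)) * X ^ (2 * m + 3 - 2 * k - 1) := by
    rw [opX_sum, ← Finset.sum_add_distrib]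
    exact Finset.sum_congr rfl fun k _ => opX_term _ _ _
  have hC : Polynomial.C Polynomial.X * (∑ k ∈ Finset.range (m + 2),
        Polynomial.C (Polynomial.C (cc (2 * m + 2) k) * Polynomial.X ^ k) * X ^ (2 * m + 2 - 2 * k))
      = ∑ k ∈ Finset.range (m + 2),
          Polynomial.C (Polynomial.C (cc (2 * m + 2) k) * Polynomial.X ^ (k + 1))
            * X ^ (2 * m + 2 - 2 * k) := by
    rw [Finset.mul_sum]
    exact Finset.sum_congr rfl fun k _ => CX_term _ _ _
  rw [hA, hC]
  -- split off the last terms of the B and C sums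
  rw [Finset.sum_range_succ (fun k => Polynomial.C (Polynomial.C ((q - 1) * qInt (2 * m + 3 - 2 * k)
      * cc (2 * m + 3) k) * Polynomial.X ^ (k + 1)) * X ^ (2 * m + 3 - 2 * k - 1)) (m + 1)]
  rw [Finset.sum_range_succ (fun k => Polynomial.C (Polynomial.C (cc (2 * m + 2) k)
      * Polynomial.X ^ (k + 1)) * X ^ (2 * m + 2 - 2 * k)) (m + 1)]
  -- split the target sum : range (m+3) = (shift) + 0-term, then split top of shifted
  rw [Finset.sum_range_succ' (fun k => Polynomial.C (Polynomial.C (cc (2 * m + 4) k)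
      * Polynomial.X ^ k) * X ^ (2 * m + 4 - 2 * k)) (m + 2)]
  rw [Finset.sum_range_succ (fun i => Polynomial.C (Polynomial.C (cc (2 * m + 4) (i + 1))
      * Polynomial.X ^ (i + 1)) * X ^ (2 * m + 4 - 2 * (i + 1))) (m + 1)]
  -- split the A sum
  rw [Finset.sum_range_succ' (fun k => Polynomial.C (Polynomial.C (cc (2 * m + 3) k)
      * Polynomial.X ^ k) * X ^ (2 * m + 3 - 2 * k + 1)) (m + 1)]
  have hT0 : Polynomial.C (Polynomial.C (cc (2 * m + 4) 0) * Polynomial.X ^ 0)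
        * X ^ (2 * m + 4 - 2 * 0)
      = Polynomial.C (Polynomial.C (cc (2 * m + 3) 0) * Polynomial.X ^ 0)
        * X ^ (2 * m + 3 - 2 * 0 + 1) := by
    rw [cc_zero (by omega), cc_zero (by omega),
        show 2 * m + 4 - 2 * 0 = 2 * m + 3 - 2 * 0 + 1 by omega]
  have hTop : Polynomial.C (Polynomial.C (cc (2 * m + 4) (m + 1 + 1)) * Polynomial.X ^ (m + 1 + 1))
        * X ^ (2 * m + 4 - 2 * (m + 1 + 1))
      = Polynomial.C (Polynomial.C ((q - 1) * qInt (2 * m + 3 - 2 * (m + 1))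
          * cc (2 * m + 3) (m + 1)) * Polynomial.X ^ (m + 1 + 1))
          * X ^ (2 * m + 3 - 2 * (m + 1) - 1)
        + Polynomial.C (Polynomial.C (cc (2 * m + 2) (m + 1)) * Polynomial.X ^ (m + 1 + 1))
          * X ^ (2 * m + 2 - 2 * (m + 1)) := by
    have hb := boundary (m + 1) (by omega)
    rw [show 2 * (m + 1) + 2 = 2 * m + 4 by ring, show 2 * (m + 1) + 1 = 2 * m + 3 by ring,
        show 2 * (m + 1) = 2 * m + 2 by ring] at hb
    rw [hb, show 2 * m + 3 - 2 * (m + 1) = 1 by omega, qInt_one,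
        show 2 * m + 4 - 2 * (m + 1 + 1) = 0 by omega, show 2 * m + 2 - 2 * (m + 1) = 0 by omega]
    simp only [map_add, add_mul, Nat.sub_self, pow_zero]
  have hstep : ∀ i ∈ Finset.range (m + 1),
      Polynomial.C (Polynomial.C (cc (2 * m + 4) (i + 1)) * Polynomial.X ^ (i + 1))
          * X ^ (2 * m + 4 - 2 * (i + 1))
      = Polynomial.C (Polynomial.C (cc (2 * m + 3) (i + 1)) * Polynomial.X ^ (i + 1))
          * X ^ (2 * m + 3 - 2 * (i + 1) + 1)
        + Polynomial.C (Polynomial.C ((q - 1) * qInt (2 * m + 3 - 2 * i) * cc (2 * m + 3) i)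
            * Polynomial.X ^ (i + 1)) * X ^ (2 * m + 3 - 2 * i - 1)
        + Polynomial.C (Polynomial.C (cc (2 * m + 2) i) * Polynomial.X ^ (i + 1))
            * X ^ (2 * m + 2 - 2 * i) := by
    intro i hi
    have him : i ≤ m := by simpa [Nat.lt_succ_iff] using Finset.mem_range.mp hi
    have hk := key (2 * m + 1 - 2 * i) i
    rw [show 2 * m + 1 - 2 * i + 2 * i + 3 = 2 * m + 4 by omega,
        show 2 * m + 1 - 2 * i + 2 * i + 2 = 2 * m + 3 by omega,
        show 2 * m + 1 - 2 * i + 2 * i + 1 = 2 * m + 2 by omega,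
        show 2 * m + 1 - 2 * i + 2 = 2 * m + 3 - 2 * i by omega] at hk
    rw [hk, show 2 * m + 3 - 2 * (i + 1) + 1 = 2 * m + 4 - 2 * (i + 1) by omega,
        show 2 * m + 3 - 2 * i - 1 = 2 * m + 4 - 2 * (i + 1) by omega,
        show 2 * m + 2 - 2 * i = 2 * m + 4 - 2 * (i + 1) by omega]
    simp only [map_add, add_mul]
  rw [Finset.sum_congr rfl hstep, hT0, hTop]
  rw [Finset.sum_add_distrib, Finset.sum_add_distrib]
  abel

lemma step (n : ℕ) :
    FF (n + 3) = opX (FF (n + 2)) + Polynomial.C Polynomial.X * FF (n + 1) := by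
  rcases Nat.even_or_odd n with ⟨m, rfl⟩ | ⟨m, rfl⟩
  · exact step_even m
  · exact step_odd m

/-- The q-Lucas polynomials `L_n(x,s) = l_n(x + (q−1)s·D_q, s)·1`,
i.e. `L_0 = 1`, `L_1 = X·1`, `L_2 = X(X·1) + 2s`, `L_n = X(L_{n−1}) + s·L_{n−2}`
for `n ≥ 3` where `X = (x·) + (q−1)s·D_q`, satisfy for `n ≥ 1`
`L_n(x,s) = Σ_{k=0}^{⌊n/2⌋} q^{C(k,2)}·([n]_q/[n−k]_q)·qbinom(n−k,k)·s^k·x^{n−2k}`. -/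
theorem qLucas_explicit (L : ℕ → Ax)
    (h0 : L 0 = 1)
    (h1 : L 1 = opX 1)
    (h2 : L 2 = opX (opX 1) + 2 * Polynomial.C Polynomial.X)
    (hrec : ∀ n : ℕ, L (n + 3) = opX (L (n + 2)) + Polynomial.C Polynomial.X * L (n + 1)) :
    ∀ n : ℕ, 1 ≤ n →
      L n = ∑ k ∈ Finset.range (n / 2 + 1),
        Polynomial.C (Polynomial.C (q ^ k.choose 2 * (qInt n / qInt (n - k)) *
            qChoose (n - k) k) * Polynomial.X ^ k) * X ^ (n - 2 * k) := by
  have hd1 : qDeriv (1 : Ax) = 0 := by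
    rw [show (1 : Ax) = Polynomial.C (1 : Ks) * X ^ 0 by simp, qDeriv_monomial]
    simp [qInt_zero]
  have hopx1 : opX 1 = X := by rw [opX, hd1, mul_zero, add_zero, mul_one]
  have base1 : L 1 = FF 1 := by
    rw [h1, hopx1]
    unfold FF
    rw [show (1 : ℕ) / 2 + 1 = 1 by norm_num, Finset.sum_range_one, cc_zero (le_refl 1)]
    simp
  have base2 : L 2 = FF 2 := by
    have hdX : qDeriv (X : Ax) = 1 := by
      rw [show (X : Ax) = Polynomial.C (1 : Ks) * X ^ 1 by simp, qDeriv_monomial]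
      simp [qInt_one]
    have c21 : cc 2 1 = qInt 2 := by
      simp [cc, qChoose, qInt_one, qFact_one, qFact_zero]
    have hq2 : qInt 2 = 1 + q := by simp [qInt, Finset.sum_range_succ]
    rw [h2, hopx1, opX, hdX, mul_one]
    unfold FF
    rw [show (2 : ℕ) / 2 + 1 = 2 by norm_num, Finset.sum_range_succ, Finset.sum_range_one,
        cc_zero (by omega : (1:ℕ) ≤ 2), c21, hq2]
    simp only [map_add, map_mul, map_one, map_sub, pow_zero, pow_one]
    ring
  have main : ∀ n : ℕ, L (n + 1) = FF (n + 1) ∧ L (n + 2) = FF (n + 2) := by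
    intro n
    induction n with
    | zero => exact ⟨base1, base2⟩
    | succ n ih =>
      refine ⟨ih.2, ?_⟩
      rw [show n + 1 + 2 = n + 3 by ring, hrec n, ih.2, ih.1, ← step n]
  intro n hn
  obtain ⟨m, rfl⟩ : ∃ m, n = m + 1 := ⟨n - 1, by omega⟩
  exact (main m).1

end
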